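/- The category W of W-semigroups and W-morphisms is cocomplete: every functor from a small category to W has a colimit. -/

import Mathlib

/-!
STATEMENT 6: The category W of W-semigroups and W-morphisms is cocomplete:
every functor from a small category to W has a colimit.
-/

universe u v w

/-- The axioms of a `W`-semigroup: a commutative monoid with a transitive
auxiliary relation `≺` satisfying `0 ≺ x`, (W1), (W3) and (W4). -/
structure WAxioms (M : Type u) [AddCommMonoid M] (r : M → M → Prop) : Prop where
  trans : ∀ {x y z : M}, r x y → r y z → r x z
  zero_rel : ∀ x : M, r 0 x
  W1 : ∀ x : M, ∃ s : ℕ → M, (∀ n, r (s n) (s (n + 1))) ∧ (∀ n, r (s n) x) ∧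
        ∀ y : M, r y x → ∃ n, r y (s n)
  W3 : ∀ {x' x y' y : M}, r x' x → r y' y → r (x' + y') (x + y)
  W4 : ∀ {x y z : M}, r x (y + z) → ∃ y' z' : M, r y' y ∧ r z' z ∧ r x (y' + z')

/-- A `W`-morphism: preserves addition, `0` and the auxiliary relation, and is
continuous: whenever `y ≺ f x` there is `x' ≺ x` with `y ≺ f x'`. -/
structure IsWHom {M : Type u} {N : Type v} [AddCommMonoid M] [AddCommMonoid N]
    (rM : M → M → Prop) (rN : N → N → Prop) (f : M → N) : Prop where
  map_zero : f 0 = 0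
  map_add : ∀ x y : M, f (x + y) = f x + f y
  map_rel : ∀ {x y : M}, rM x y → rN (f x) (f y)
  cont : ∀ (x : M) (y : N), rN y (f x) → ∃ x' : M, rM x' x ∧ rN y (f x')

theorem WAxioms.transitive {M : Type u} [AddCommMonoid M] {r : M → M → Prop}
    (h : WAxioms M r) : Transitive r := fun _ _ _ hxy hyz => h.trans hxy hyz

theorem isWHom_id {M : Type u} [AddCommMonoid M] {r : M → M → Prop} (h : WAxioms M r) :
    IsWHom r r (id : M → M) := by
  refine ⟨rfl, fun _ _ => rfl, fun hxy => hxy, ?_⟩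
  intro x y hyx
  obtain ⟨s, _, hsx, hcof⟩ := h.W1 x
  obtain ⟨n, hn⟩ := hcof y hyx
  exact ⟨s n, hsx n, hn⟩

theorem IsWHom.comp {M : Type u} {N : Type v} {P : Type w} [AddCommMonoid M]
    [AddCommMonoid N] [AddCommMonoid P] {rM : M → M → Prop} {rN : N → N → Prop}
    {rP : P → P → Prop} (hP : Transitive rP) {g : N → P} {f : M → N}
    (hg : IsWHom rN rP g) (hf : IsWHom rM rN f) : IsWHom rM rP (g ∘ f) := by
  refine ⟨?_, ?_, ?_, ?_⟩
  · show g (f 0) = 0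
    rw [hf.map_zero, hg.map_zero]
  · intro x y
    show g (f (x + y)) = g (f x) + g (f y)
    rw [hf.map_add, hg.map_add]
  · exact fun hxy => hg.map_rel (hf.map_rel hxy)
  · intro x y hy
    obtain ⟨u, hu, hyu⟩ := hg.cont (f x) y hy
    obtain ⟨x', hx', hux'⟩ := hf.cont x u hu
    exact ⟨x', hx', hP hyu (hg.map_rel hux')⟩

/-- The category `W` of `W`-semigroups: objects are `W`-semigroups, morphisms are
`W`-morphisms. -/
structure WCat : Type (u + 1) where
  carrier : Type u
  [addCommMonoid : AddCommMonoid carrier]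
  rel : carrier → carrier → Prop
  ax : WAxioms carrier rel

attribute [instance] WCat.addCommMonoid

instance : CategoryTheory.Category WCat.{u} where
  Hom S T := { f : S.carrier → T.carrier // IsWHom S.rel T.rel f }
  id S := ⟨id, isWHom_id S.ax⟩
  comp := fun {X Y Z} f g =>
    ⟨g.1 ∘ f.1, g.2.comp Z.ax.transitive f.2⟩

open CategoryTheory

section lemmas

variable {M : Type u} [AddCommMonoid M] {r : M → M → Prop}

/-- Interpolation: from (W1), any `a ≺ b` can be interpolated as `a ≺ m ≺ b`. -/
theorem WAxioms.interp (h : WAxioms M r) {a b : M} (hab : r a b) : ∃ m, r a m ∧ r m b := by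
  obtain ⟨s, _, hsb, hcof⟩ := h.W1 b
  obtain ⟨n, hn⟩ := hcof a hab
  exact ⟨s n, hn, hsb n⟩

/-- Monotone use of an increasing sequence. -/
theorem WAxioms.seq_mono (h : WAxioms M r) {s : ℕ → M} (hs : ∀ n, r (s n) (s (n + 1)))
    {z : M} {m n : ℕ} (hmn : m ≤ n) (hz : r z (s m)) : r z (s n) := by
  induction hmn with
  | refl => exact hz
  | step _ ih => exact h.trans ih (hs _)

end lemmas

noncomputable section Coproduct
open scoped Classical

variable {ι : Type u} {S : ι → Type u} [∀ i, AddCommMonoid (S i)]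
  {r : ∀ i, S i → S i → Prop}

/-- The relation on the direct sum: componentwise. -/
def coprodRel (r : ∀ i, S i → S i → Prop) (a b : Π₀ i, S i) : Prop := ∀ i, r i (a i) (b i)

theorem coprodAxioms (ax : ∀ i, WAxioms (S i) (r i)) :
    WAxioms (Π₀ i, S i) (coprodRel r) := by
  constructor
  · exact fun hxy hyz i => (ax i).trans (hxy i) (hyz i)
  · intro x i
    rw [DFinsupp.zero_apply]
    exact (ax i).zero_rel (x i)
  · -- W1
    intro x
    have hex : ∀ i, ∃ s : ℕ → S i, (x i = 0 → ∀ n, s n = 0) ∧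
        (∀ n, r i (s n) (s (n + 1))) ∧ (∀ n, r i (s n) (x i)) ∧
        (∀ v, r i v (x i) → ∃ n, r i v (s n)) := by
      intro i
      by_cases hx0 : x i = 0
      · refine ⟨fun _ => 0, fun _ _ => rfl, fun _ => (ax i).zero_rel 0, ?_, ?_⟩
        · intro n; rw [hx0]; exact (ax i).zero_rel 0
        · intro v hv; exact ⟨0, by rwa [hx0] at hv⟩
      · obtain ⟨s, h1, h2, h3⟩ := (ax i).W1 (x i)
        exact ⟨s, fun h => absurd h hx0, h1, h2, h3⟩
    choose SEQ hSEQ0 hSEQinc hSEQlt hSEQcof using hex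
    refine ⟨fun n => DFinsupp.mapRange (fun i v => if v = 0 then 0 else SEQ i n)
      (fun i => by simp) x, ?_, ?_, ?_⟩
    · intro n i
      rw [DFinsupp.mapRange_apply, DFinsupp.mapRange_apply]
      by_cases hx0 : x i = 0
      · simp only [hx0, if_pos rfl]
        exact (ax i).zero_rel 0
      · simp only [hx0, if_neg hx0]
        exact hSEQinc i n
    · intro n i
      rw [DFinsupp.mapRange_apply]
      by_cases hx0 : x i = 0
      · simp only [hx0, if_pos rfl]
        exact (ax i).zero_rel 0
      · simp only [if_neg hx0]
        exact hSEQlt i n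
    · intro y hy
      have key : ∀ i, ∃ n, r i (y i) (SEQ i n) := fun i => hSEQcof i (y i) (hy i)
      choose N hN using key
      refine ⟨y.support.sup N, ?_⟩
      intro i
      rw [DFinsupp.mapRange_apply]
      have hyi : r i (y i) (SEQ i (y.support.sup N)) := by
        by_cases hy0 : y i = 0
        · rw [hy0]; exact (ax i).zero_rel _
        · have hmem : i ∈ y.support := DFinsupp.mem_support_iff.2 hy0
          exact (ax i).seq_mono (hSEQinc i) (Finset.le_sup hmem) (hN i)
      by_cases hx0 : x i = 0
      · rw [if_pos hx0, ← hSEQ0 i hx0 (y.support.sup N)]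
        exact hyi
      · simpa only [if_neg hx0] using hyi
  · -- W3
    intro x' x y' y h1 h2 i
    rw [DFinsupp.add_apply, DFinsupp.add_apply]
    exact (ax i).W3 (h1 i) (h2 i)
  · -- W4
    intro x y z hx
    have hex : ∀ i, ∃ p : S i × S i, r i p.1 (y i) ∧ r i p.2 (z i) ∧
        r i (x i) (p.1 + p.2) ∧ (y i = 0 → p.1 = 0) ∧ (z i = 0 → p.2 = 0) := by
      intro i
      have hxi : r i (x i) (y i + z i) := by
        have := hx i; rwa [DFinsupp.add_apply] at this
      by_cases hy0 : y i = 0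
      · by_cases hz0 : z i = 0
        · refine ⟨⟨0, 0⟩, (ax i).zero_rel _, (ax i).zero_rel _, ?_, fun _ => rfl, fun _ => rfl⟩
          rw [add_zero]
          rw [hy0, hz0, add_zero] at hxi
          exact (ax i).trans hxi ((ax i).zero_rel 0)
        · rw [hy0, zero_add] at hxi
          obtain ⟨m, hm1, hm2⟩ := (ax i).interp hxi
          exact ⟨⟨0, m⟩, (ax i).zero_rel _, hm2, by rwa [zero_add], fun _ => rfl,
            fun h => absurd h hz0⟩
      · by_cases hz0 : z i = 0
        · rw [hz0, add_zero] at hxi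
          obtain ⟨m, hm1, hm2⟩ := (ax i).interp hxi
          exact ⟨⟨m, 0⟩, hm2, (ax i).zero_rel _, by rwa [add_zero], fun h => absurd h hy0,
            fun _ => rfl⟩
        · obtain ⟨y', z', h1, h2, h3⟩ := (ax i).W4 hxi
          exact ⟨⟨y', z'⟩, h1, h2, h3, fun h => absurd h hy0, fun h => absurd h hz0⟩
    choose P hP1 hP2 hP3 hPy hPz using hex
    refine ⟨DFinsupp.mapRange (fun i v => if v = 0 then 0 else (P i).1) (fun i => by simp) y,
      DFinsupp.mapRange (fun i v => if v = 0 then 0 else (P i).2) (fun i => by simp) z,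
      ?_, ?_, ?_⟩
    · intro i
      rw [DFinsupp.mapRange_apply]
      by_cases hy0 : y i = 0
      · rw [if_pos hy0]; exact (ax i).zero_rel _
      · rw [if_neg hy0]; exact hP1 i
    · intro i
      rw [DFinsupp.mapRange_apply]
      by_cases hz0 : z i = 0
      · rw [if_pos hz0]; exact (ax i).zero_rel _
      · rw [if_neg hz0]; exact hP2 i
    · intro i
      rw [DFinsupp.add_apply, DFinsupp.mapRange_apply, DFinsupp.mapRange_apply]
      have e1 : (if y i = 0 then 0 else (P i).1) = (P i).1 := by
        by_cases hy0 : y i = 0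
        · rw [if_pos hy0, hPy i hy0]
        · rw [if_neg hy0]
      have e2 : (if z i = 0 then 0 else (P i).2) = (P i).2 := by
        by_cases hz0 : z i = 0
        · rw [if_pos hz0, hPz i hz0]
        · rw [if_neg hz0]
      rw [e1, e2]
      exact hP3 i

end Coproduct

noncomputable section WCoprodHoms
open scoped Classical

variable {ι : Type u} (f : ι → WCat.{u})

/-- The inclusions into the coproduct. -/
theorem inclW (i : ι) :
    IsWHom (f i).rel (coprodRel fun i => (f i).rel) (fun x => DFinsupp.single i x) := by
  constructor
  · exact DFinsupp.single_zero i
  · intro x y; ext j; simp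
  · intro x y hxy j
    rcases eq_or_ne i j with rfl | hij
    · rwa [DFinsupp.single_eq_same, DFinsupp.single_eq_same]
    · rw [DFinsupp.single_eq_of_ne hij.symm, DFinsupp.single_eq_of_ne hij.symm]
      exact (f j).ax.zero_rel 0
  · intro x y hy
    have hyi : (f i).rel (y i) x := by
      have := hy i; rwa [DFinsupp.single_eq_same] at this
    obtain ⟨m, hm1, hm2⟩ := (f i).ax.interp hyi
    refine ⟨m, hm2, ?_⟩
    intro j
    rcases eq_or_ne i j with rfl | hij
    · rwa [DFinsupp.single_eq_same]
    · rw [DFinsupp.single_eq_of_ne hij.symm]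
      have := hy j; rwa [DFinsupp.single_eq_of_ne hij.symm] at this

variable {T : WCat.{u}} (g : ∀ i, { h : (f i).carrier → T.carrier // IsWHom (f i).rel T.rel h })

/-- The bundled additive maps. -/
def WCoprodφ (i : ι) : (f i).carrier →+ T.carrier :=
  { toFun := (g i).1, map_zero' := (g i).2.map_zero, map_add' := (g i).2.map_add }

/-- The induced map out of the coproduct. -/
def WCoprodDesc (a : (Π₀ i, (f i).carrier)) : T.carrier :=
  DFinsupp.sumAddHom (WCoprodφ f g) a

theorem WCoprodDesc_sum_eq (t : Finset ι) (a : (Π₀ i, (f i).carrier))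
    (ht : ∀ i, a i ≠ 0 → i ∈ t) :
    WCoprodDesc f g a = ∑ i ∈ t, (g i).1 (a i) := by
  rw [WCoprodDesc, DFinsupp.sumAddHom_apply, DFinsupp.sum]
  refine Finset.sum_subset (fun i hi => ht i (DFinsupp.mem_support_iff.1 hi)) ?_
  intro i _ hins
  rw [DFinsupp.notMem_support_iff.1 hins]
  exact (g i).2.map_zero

theorem WCoprod_sum_rel (t : Finset ι) (u v : ι → T.carrier)
    (h : ∀ i ∈ t, T.rel (u i) (v i)) :
    T.rel (∑ i ∈ t, u i) (∑ i ∈ t, v i) := by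
  induction t using Finset.induction_on with
  | empty => simpa using T.ax.zero_rel 0
  | insert _ _ hj ih =>
      rw [Finset.sum_insert hj, Finset.sum_insert hj]
      exact T.ax.W3 (h _ (Finset.mem_insert_self _ _))
        (ih fun i hi => h i (Finset.mem_insert_of_mem hi))

theorem WCoprodDesc_cont_aux (t : Finset ι) :
    ∀ (a : (Π₀ i, (f i).carrier)) (y : T.carrier),
      T.rel y (∑ i ∈ t, (g i).1 (a i)) →
      ∃ a' : (Π₀ i, (f i).carrier), (∀ i, (f i).rel (a' i) (a i)) ∧
        (∀ i, a' i ≠ 0 → i ∈ t) ∧ T.rel y (∑ i ∈ t, (g i).1 (a' i)) := by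
  induction t using Finset.induction_on with
  | empty =>
      intro a y hy
      refine ⟨0, fun i => by rw [DFinsupp.zero_apply]; exact (f i).ax.zero_rel _,
        fun i hi => absurd (DFinsupp.zero_apply i) hi, by simpa using hy⟩
  | @insert j t hj ih =>
      intro a y hy
      rw [Finset.sum_insert hj] at hy
      obtain ⟨u', v', hu', hv', hyuv⟩ := T.ax.W4 hy
      obtain ⟨xj, hxj, hu'2⟩ := (g j).2.cont (a j) u' hu'
      obtain ⟨a'', ha1, ha2, ha3⟩ := ih a v' hv'
      have haj : a'' j = 0 := by
        by_contra hne
        exact hj (ha2 j hne)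
      obtain ⟨a', ha'⟩ : ∃ a' : Π₀ i, (f i).carrier, a' = DFinsupp.single j xj + a'' :=
        ⟨_, rfl⟩
      have happ : ∀ i, a' i = (DFinsupp.single j xj : Π₀ i, (f i).carrier) i + a'' i :=
        fun i => by rw [ha']; exact DFinsupp.add_apply _ _ i
      refine ⟨a', ?_, ?_, ?_⟩
      · intro i
        rcases eq_or_ne i j with rfl | hij
        · rw [happ i, DFinsupp.single_eq_same, haj, add_zero]
          exact hxj
        · rw [happ i, DFinsupp.single_eq_of_ne hij, zero_add]
          exact ha1 i
      · intro i hi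
        rcases eq_or_ne i j with rfl | hij
        · exact Finset.mem_insert_self _ _
        · rw [happ i, DFinsupp.single_eq_of_ne hij, zero_add] at hi
          exact Finset.mem_insert_of_mem (ha2 i hi)
      · rw [Finset.sum_insert hj]
        have e1 : a' j = xj := by
          rw [happ j, DFinsupp.single_eq_same, haj, add_zero]
        have e2 : ∑ i ∈ t, (g i).1 (a' i) = ∑ i ∈ t, (g i).1 (a'' i) := by
          refine Finset.sum_congr rfl fun i hi => ?_
          have hij : i ≠ j := fun h => hj (h ▸ hi)
          rw [happ i, DFinsupp.single_eq_of_ne hij, zero_add]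
        rw [e1, e2]
        exact T.ax.trans hyuv (T.ax.W3 hu'2 ha3)

theorem WCoprodDescW : IsWHom (coprodRel fun i => (f i).rel) T.rel (WCoprodDesc f g) := by
  constructor
  · exact (DFinsupp.sumAddHom (WCoprodφ f g)).map_zero
  · exact fun a b => (DFinsupp.sumAddHom (WCoprodφ f g)).map_add a b
  · intro a b hab
    rw [WCoprodDesc_sum_eq f g (a.support ∪ b.support) a
        (fun i hi => Finset.mem_union_left _ (DFinsupp.mem_support_iff.2 hi)),
      WCoprodDesc_sum_eq f g (a.support ∪ b.support) b
        (fun i hi => Finset.mem_union_right _ (DFinsupp.mem_support_iff.2 hi))]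
    exact WCoprod_sum_rel _ _ _ fun i _ => (g i).2.map_rel (hab i)
  · intro a y hy
    rw [WCoprodDesc_sum_eq f g a.support a (fun i hi => DFinsupp.mem_support_iff.2 hi)] at hy
    obtain ⟨a', h1, h2, h3⟩ := WCoprodDesc_cont_aux f g a.support a y hy
    refine ⟨a', h1, ?_⟩
    rwa [WCoprodDesc_sum_eq f g a.support a' h2]

theorem WCoprodDesc_single (i : ι) (x : (f i).carrier) :
    WCoprodDesc f g (DFinsupp.single i x) = (g i).1 x :=
  DFinsupp.sumAddHom_single _ _ _

end WCoprodHoms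

noncomputable section WCoprodColimit
open CategoryTheory Limits
open scoped Classical

variable {ι : Type u} (f : ι → WCat.{u})

/-- The coproduct object in `W`. -/
def WCoprodObj : WCat.{u} where
  carrier := Π₀ i, (f i).carrier
  rel := coprodRel fun i => (f i).rel
  ax := coprodAxioms fun i => (f i).ax

/-- The coproduct cofan in `W`. -/
def WCofan : Cofan f :=
  Cofan.mk (WCoprodObj f)
    (fun i => (⟨fun x => DFinsupp.single i x, inclW f i⟩ : f i ⟶ WCoprodObj f))

/-- The coproduct cofan is a colimit. -/
def WCofanIsColimit : IsColimit (WCofan f) := by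
  refine mkCofanColimit _
    (fun t => ⟨WCoprodDesc f (fun i => t.inj i), WCoprodDescW f (fun i => t.inj i)⟩)
    (fun t i => ?_) (fun t m hm => ?_)
  · apply Subtype.ext
    funext x
    exact WCoprodDesc_single f (fun i => t.inj i) i x
  · apply Subtype.ext
    funext a
    show m.1 a = WCoprodDesc f (fun i => t.inj i) a
    induction a using DFinsupp.induction with
    | h0 =>
        refine m.2.map_zero.trans ?_
        exact ((DFinsupp.sumAddHom (WCoprodφ f (fun i => t.inj i))).map_zero).symm
    | ha i b rest h1 h2 ih =>
        have hadd := m.2.map_add (DFinsupp.single i b) rest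
        have hsingle : m.1 (DFinsupp.single i b) = (t.inj i).1 b := by
          have := congrArg Subtype.val (hm i)
          exact congrFun this b
        show m.1 (DFinsupp.single i b + rest) = DFinsupp.sumAddHom (WCoprodφ f (fun i => t.inj i))
          (DFinsupp.single i b + rest)
        refine hadd.trans ?_
        rw [hsingle, (DFinsupp.sumAddHom (WCoprodφ f (fun i => t.inj i))).map_add,
          DFinsupp.sumAddHom_single]
        rw [ih]
        rfl

instance hasColimitDiscreteW : HasColimit (Discrete.functor f) :=
  HasColimit.mk ⟨WCofan f, WCofanIsColimit f⟩

instance hasCoproductsW : HasCoproducts.{u} WCat.{u} := fun _ =>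
  ⟨fun F => hasColimit_of_iso Discrete.natIsoFunctor⟩

end WCoprodColimit

noncomputable section WCoequalizer
open CategoryTheory Limits Relation

variable {X Y : WCat.{u}} (f g : X ⟶ Y)

/-- The generating relation of the coequalizer congruence. -/
def coeqR : Y.carrier → Y.carrier → Prop := fun a b => ∃ x, a = f.1 x ∧ b = g.1 x

/-- The coequalizer congruence. -/
def coeqCon : AddCon Y.carrier := addConGen (coeqR f g)

/-- The class map. -/
def cq (a : Y.carrier) : (coeqCon f g).Quotient := a

theorem cq_surj : Function.Surjective (cq f g) := fun p =>
  Quotient.inductionOn' p fun a => ⟨a, rfl⟩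

theorem cq_zero : cq f g 0 = 0 := AddCon.coe_zero

theorem cq_add (a b : Y.carrier) : cq f g (a + b) = cq f g a + cq f g b := AddCon.coe_add a b

theorem cq_eq {a b : Y.carrier} (h : coeqCon f g a b) : cq f g a = cq f g b := (AddCon.eq _).2 h

theorem cq_eq' {a b : Y.carrier} (h : cq f g a = cq f g b) : coeqCon f g a b := (AddCon.eq _).1 h

theorem coeqCon_fg (x : X.carrier) : coeqCon f g (f.1 x) (g.1 x) :=
  AddConGen.Rel.of _ _ ⟨x, rfl, rfl⟩

/-- The one-step relation on the quotient. -/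
def coeqR0 : (coeqCon f g).Quotient → (coeqCon f g).Quotient → Prop := fun p q =>
  ∃ a b : Y.carrier, Y.rel a b ∧ p = cq f g a ∧ q = cq f g b

/-- The auxiliary relation on the quotient: the transitive closure of `coeqR0`. -/
def coeqRel : (coeqCon f g).Quotient → (coeqCon f g).Quotient → Prop :=
  TransGen (coeqR0 f g)

theorem coeqR0_add {p q p' q'} (h : coeqR0 f g p q) (h' : coeqR0 f g p' q') :
    coeqR0 f g (p + p') (q + q') := by
  obtain ⟨a, b, hab, rfl, rfl⟩ := h
  obtain ⟨a', b', hab', rfl, rfl⟩ := h'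
  exact ⟨a + a', b + b', Y.ax.W3 hab hab', (cq_add f g a a').symm, (cq_add f g b b').symm⟩

theorem coeqR0_interp {p q} (h : coeqR0 f g p q) :
    ∃ z, coeqR0 f g p z ∧ coeqR0 f g z q := by
  obtain ⟨a, b, hab, rfl, rfl⟩ := h
  obtain ⟨m, hm1, hm2⟩ := Y.ax.interp hab
  exact ⟨cq f g m, ⟨a, m, hm1, rfl, rfl⟩, ⟨m, b, hm2, rfl, rfl⟩⟩

/-- Chains of fixed length for `coeqR0`. -/
def coeqChain : ℕ → (coeqCon f g).Quotient → (coeqCon f g).Quotient → Prop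
  | 0, p, q => p = q
  | n + 1, p, q => ∃ z, coeqR0 f g p z ∧ coeqChain n z q

theorem coeqChain_tg : ∀ (n) {p q}, coeqChain f g (n + 1) p q → coeqRel f g p q := by
  intro n
  induction n with
  | zero => rintro p q ⟨z, hz, rfl⟩; exact TransGen.single hz
  | succ n ih => rintro p q ⟨z, hz, hc⟩; exact TransGen.head hz (ih hc)

theorem coeqChain_append : ∀ (n) {p q s}, coeqChain f g n p q → coeqR0 f g q s →
    coeqChain f g (n + 1) p s := by
  intro n
  induction n with
  | zero => rintro p q s rfl h; exact ⟨s, h, rfl⟩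
  | succ n ih => rintro p q s ⟨z, hz, hc⟩ h; exact ⟨z, hz, ih hc h⟩

theorem tg_coeqChain {p q} (h : coeqRel f g p q) : ∃ n, coeqChain f g (n + 1) p q := by
  induction h with
  | single h => exact ⟨0, _, h, rfl⟩
  | tail _ h ih =>
      obtain ⟨n, hn⟩ := ih
      exact ⟨n + 1, coeqChain_append f g _ hn h⟩

theorem coeqChain_succ : ∀ (n) {p q}, coeqChain f g (n + 1) p q → coeqChain f g (n + 2) p q := by
  intro n
  induction n with
  | zero =>
      rintro p q ⟨z, hz, rfl⟩
      obtain ⟨m, hm1, hm2⟩ := coeqR0_interp f g hz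
      exact ⟨m, hm1, z, hm2, rfl⟩
  | succ n ih => rintro p q ⟨z, hz, hc⟩; exact ⟨z, hz, ih hc⟩

theorem coeqChain_pad : ∀ (k n) {p q}, coeqChain f g (n + 1) p q →
    coeqChain f g (n + 1 + k) p q := by
  intro k
  induction k with
  | zero => intro n p q hc; exact hc
  | succ k ih =>
      intro n p q hc
      have h1 : coeqChain f g ((n + k) + 1) p q := by
        have := ih n hc
        rwa [show n + 1 + k = (n + k) + 1 by omega] at this
      have h2 := coeqChain_succ f g (n + k) h1
      rwa [show n + 1 + (k + 1) = (n + k) + 2 by omega]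

theorem coeqChain_le {n m : ℕ} (h : n + 1 ≤ m) {p q} (hc : coeqChain f g (n + 1) p q) :
    coeqChain f g m p q := by
  have : m = n + 1 + (m - (n + 1)) := by omega
  rw [this]
  exact coeqChain_pad f g _ _ hc

theorem coeqChain_add : ∀ (n) {p q p' q'}, coeqChain f g n p q → coeqChain f g n p' q' →
    coeqChain f g n (p + p') (q + q') := by
  intro n
  induction n with
  | zero => rintro p q p' q' rfl rfl; rfl
  | succ n ih =>
      rintro p q p' q' ⟨z, hz, hc⟩ ⟨z', hz', hc'⟩
      exact ⟨z + z', coeqR0_add f g hz hz', ih hc hc'⟩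

/-- (W3) for the quotient relation. -/
theorem coeqRel_add {p q p' q'} (h : coeqRel f g p q) (h' : coeqRel f g p' q') :
    coeqRel f g (p + p') (q + q') := by
  obtain ⟨n, hn⟩ := tg_coeqChain f g h
  obtain ⟨m, hm⟩ := tg_coeqChain f g h'
  have hn' := coeqChain_le f g (Nat.succ_le_succ (Nat.le_max_left n m)) hn
  have hm' := coeqChain_le f g (Nat.succ_le_succ (Nat.le_max_right n m)) hm
  exact coeqChain_tg f g _ (coeqChain_add f g _ hn' hm')


/-- Key lemma: elements way-below congruent elements can be tracked through
the congruence, up to the transitive closure relation on the quotient. -/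
theorem coeqKey {w v : Y.carrier} (h : coeqCon f g w v) :
    (∀ m, Y.rel m w → ∃ t, Y.rel t v ∧ coeqRel f g (cq f g m) (cq f g t)) ∧
    (∀ m, Y.rel m v → ∃ t, Y.rel t w ∧ coeqRel f g (cq f g m) (cq f g t)) := by
  have h' : AddConGen.Rel (coeqR f g) w v := h
  clear h
  induction h' with
  | of a b hab =>
      obtain ⟨x, rfl, rfl⟩ := hab
      constructor
      · intro m hm
        obtain ⟨x', hx', hm'⟩ := f.2.cont x m hm
        refine ⟨g.1 x', g.2.map_rel hx', ?_⟩
        have e : cq f g (g.1 x') = cq f g (f.1 x') := (cq_eq f g (coeqCon_fg f g x')).symm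
        exact TransGen.single ⟨m, f.1 x', hm', rfl, e⟩
      · intro m hm
        obtain ⟨x', hx', hm'⟩ := g.2.cont x m hm
        refine ⟨f.1 x', f.2.map_rel hx', ?_⟩
        have e : cq f g (f.1 x') = cq f g (g.1 x') := cq_eq f g (coeqCon_fg f g x')
        exact TransGen.single ⟨m, g.1 x', hm', rfl, e⟩
  | refl w =>
      constructor <;>
      · intro m hm
        obtain ⟨t, ht1, ht2⟩ := Y.ax.interp hm
        exact ⟨t, ht2, TransGen.single ⟨m, t, ht1, rfl, rfl⟩⟩
  | symm _ ih => exact ⟨ih.2, ih.1⟩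
  | trans _ _ ih1 ih2 =>
      constructor
      · intro m hm
        obtain ⟨t, ht, htg⟩ := ih1.1 m hm
        obtain ⟨t', ht', htg'⟩ := ih2.1 t ht
        exact ⟨t', ht', htg.trans htg'⟩
      · intro m hm
        obtain ⟨t, ht, htg⟩ := ih2.2 m hm
        obtain ⟨t', ht', htg'⟩ := ih1.2 t ht
        exact ⟨t', ht', htg.trans htg'⟩
  | add _ _ ih1 ih2 =>
      constructor
      · intro m hm
        obtain ⟨a, b, ha, hb, hab⟩ := Y.ax.W4 hm
        obtain ⟨t, ht, htg⟩ := ih1.1 a ha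
        obtain ⟨t', ht', htg'⟩ := ih2.1 b hb
        refine ⟨t + t', Y.ax.W3 ht ht', ?_⟩
        have step : coeqR0 f g (cq f g m) (cq f g (a + b)) := ⟨m, a + b, hab, rfl, rfl⟩
        have tgadd : coeqRel f g (cq f g (a + b)) (cq f g (t + t')) := by
          rw [cq_add f g a b, cq_add f g t t']
          exact coeqRel_add f g htg htg'
        exact TransGen.head step tgadd
      · intro m hm
        obtain ⟨a, b, ha, hb, hab⟩ := Y.ax.W4 hm
        obtain ⟨t, ht, htg⟩ := ih1.2 a ha
        obtain ⟨t', ht', htg'⟩ := ih2.2 b hb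
        refine ⟨t + t', Y.ax.W3 ht ht', ?_⟩
        have step : coeqR0 f g (cq f g m) (cq f g (a + b)) := ⟨m, a + b, hab, rfl, rfl⟩
        have tgadd : coeqRel f g (cq f g (a + b)) (cq f g (t + t')) := by
          rw [cq_add f g a b, cq_add f g t t']
          exact coeqRel_add f g htg htg'
        exact TransGen.head step tgadd

/-- Decomposition of the quotient relation: a reflexive-transitive part followed by one step
whose top is tracked back into `Y` via the key lemma. -/
theorem coeqRel_last {p : (coeqCon f g).Quotient} {b : Y.carrier}
    (h : coeqRel f g p (cq f g b)) :
    ∃ t, Y.rel t b ∧ ∃ e, ReflTransGen (coeqR0 f g) p (cq f g e) ∧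
      coeqRel f g (cq f g e) (cq f g t) := by
  obtain ⟨z, hz1, hz2⟩ := (TransGen.tail'_iff).1 h
  obtain ⟨e, hb', heh, rfl, hq⟩ := hz2
  have hcon : coeqCon f g hb' b := cq_eq' f g hq.symm
  obtain ⟨t, ht, htg⟩ := (coeqKey f g hcon).1 e heh
  exact ⟨t, ht, e, hz1, htg⟩

theorem coeqAxioms : WAxioms (coeqCon f g).Quotient (coeqRel f g) := by
  constructor
  · exact fun h1 h2 => h1.trans h2
  · intro p
    obtain ⟨b, rfl⟩ := cq_surj f g p
    refine TransGen.single ⟨0, b, Y.ax.zero_rel b, (cq_zero f g).symm, rfl⟩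
  · -- W1
    intro p
    obtain ⟨b, rfl⟩ := cq_surj f g p
    obtain ⟨s, hinc, hlt, hcof⟩ := Y.ax.W1 b
    refine ⟨fun n => cq f g (s n), ?_, ?_, ?_⟩
    · exact fun n => TransGen.single ⟨s n, s (n + 1), hinc n, rfl, rfl⟩
    · exact fun n => TransGen.single ⟨s n, b, hlt n, rfl, rfl⟩
    · intro y hy
      obtain ⟨t, ht, e, he1, he2⟩ := coeqRel_last f g hy
      obtain ⟨n, hn⟩ := hcof t ht
      refine ⟨n, ?_⟩
      have : coeqRel f g (cq f g e) (cq f g (s n)) :=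
        he2.trans (TransGen.single ⟨t, s n, hn, rfl, rfl⟩)
      exact TransGen.trans_right he1 this
  · exact fun h1 h2 => coeqRel_add f g h1 h2
  · -- W4
    intro p q1 q2 hp
    obtain ⟨b1, rfl⟩ := cq_surj f g q1
    obtain ⟨b2, rfl⟩ := cq_surj f g q2
    rw [← cq_add f g b1 b2] at hp
    obtain ⟨t, ht, e, he1, he2⟩ := coeqRel_last f g hp
    obtain ⟨b1', b2', h1, h2, h3⟩ := Y.ax.W4 ht
    refine ⟨cq f g b1', cq f g b2',
      TransGen.single ⟨b1', b1, h1, rfl, rfl⟩,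
      TransGen.single ⟨b2', b2, h2, rfl, rfl⟩, ?_⟩
    rw [← cq_add f g b1' b2']
    have : coeqRel f g (cq f g e) (cq f g (b1' + b2')) :=
      he2.trans (TransGen.single ⟨t, b1' + b2', h3, rfl, rfl⟩)
    exact TransGen.trans_right he1 this


/-- The coequalizer object in `W`. -/
def WCoeqObj : WCat.{u} where
  carrier := (coeqCon f g).Quotient
  rel := coeqRel f g
  ax := coeqAxioms f g

/-- The projection onto the coequalizer is a `W`-morphism. -/
theorem coeqπW : IsWHom Y.rel (coeqRel f g) (cq f g) := by
  constructor
  · exact cq_zero f g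
  · exact cq_add f g
  · exact fun {a b} hab => TransGen.single ⟨a, b, hab, rfl, rfl⟩
  · intro x y hy
    obtain ⟨t, ht, e, he1, he2⟩ := coeqRel_last f g hy
    obtain ⟨x', hx'1, hx'2⟩ := Y.ax.interp ht
    refine ⟨x', hx'2, ?_⟩
    have : coeqRel f g (cq f g e) (cq f g x') :=
      he2.trans (TransGen.single ⟨t, x', hx'1, rfl, rfl⟩)
    exact TransGen.trans_right he1 this

/-- The projection as a morphism in `W`. -/
def coeqπ : Y ⟶ WCoeqObj f g := ⟨cq f g, coeqπW f g⟩

theorem coeq_condition : f ≫ coeqπ f g = g ≫ coeqπ f g := by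
  apply Subtype.ext
  funext x
  exact cq_eq f g (coeqCon_fg f g x)

/-- The coequalizer cofork. -/
def WCofork : Cofork f g := Cofork.ofπ (coeqπ f g) (coeq_condition f g)

section Desc

variable (s : Cofork f g)

/-- The underlying additive map to the cofork point. -/
def coeqH : Y.carrier →+ s.pt.carrier :=
  { toFun := s.π.1, map_zero' := s.π.2.map_zero, map_add' := s.π.2.map_add }

theorem coeqCon_le : coeqCon f g ≤ AddCon.ker (coeqH f g s) := by
  refine AddCon.addConGen_le.2 ?_
  rintro a b ⟨x, rfl, rfl⟩
  show s.π.1 (f.1 x) = s.π.1 (g.1 x)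
  have := congrArg Subtype.val s.condition
  exact congrFun this x

/-- The descended additive map. -/
def coeqDesc : (coeqCon f g).Quotient →+ s.pt.carrier :=
  (coeqCon f g).lift (coeqH f g s) (coeqCon_le f g s)

theorem coeqDesc_cq (a : Y.carrier) : coeqDesc f g s (cq f g a) = s.π.1 a :=
  AddCon.lift_coe (coeqCon_le f g s) a

theorem coeqDescW : IsWHom (coeqRel f g) s.pt.rel (coeqDesc f g s) := by
  constructor
  · exact (coeqDesc f g s).map_zero
  · exact fun a b => (coeqDesc f g s).map_add a b
  · intro p q hpq
    induction hpq with
    | single h =>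
        obtain ⟨a, b, hab, rfl, rfl⟩ := h
        rw [coeqDesc_cq, coeqDesc_cq]
        exact s.π.2.map_rel hab
    | tail _ h ih =>
        obtain ⟨a, b, hab, rfl, rfl⟩ := h
        rw [coeqDesc_cq] at ih ⊢
        exact s.pt.ax.trans ih (s.π.2.map_rel hab)
    -- note: the `tail` case above may need care; see below
  · intro p y hy
    obtain ⟨a, rfl⟩ := cq_surj f g p
    rw [coeqDesc_cq] at hy
    obtain ⟨x', hx', hy'⟩ := s.π.2.cont a y hy
    refine ⟨cq f g x', TransGen.single ⟨x', a, hx', rfl, rfl⟩, ?_⟩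
    rwa [coeqDesc_cq]

end Desc

/-- The cofork is a colimit. -/
def WCoforkIsColimit : IsColimit (WCofork f g) := by
  refine Cofork.IsColimit.mk _ (fun s => ⟨coeqDesc f g s, coeqDescW f g s⟩)
    (fun s => ?_) (fun s m hm => ?_)
  · apply Subtype.ext
    funext a
    exact coeqDesc_cq f g s a
  · apply Subtype.ext
    funext p
    obtain ⟨a, rfl⟩ := cq_surj f g p
    have := congrArg Subtype.val hm
    have h2 := congrFun this a
    exact h2.trans (coeqDesc_cq f g s a).symm

instance hasCoeqW : HasColimit (parallelPair f g) :=
  HasColimit.mk ⟨WCofork f g, WCoforkIsColimit f g⟩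

end WCoequalizer

/-- **The category W is cocomplete.** -/
theorem w_cocomplete :
    ∀ (I : Type u) (_ : SmallCategory I) (F : I ⥤ WCat.{u}), Limits.HasColimit F := by
  intro I _ F
  haveI : Limits.HasCoequalizers WCat.{u} :=
    Limits.hasCoequalizers_of_hasColimit_parallelPair _
  haveI : Limits.HasColimitsOfSize.{u, u} WCat.{u} :=
    Limits.has_colimits_of_hasCoequalizers_and_coproducts
  infer_instance
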